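/- Let G be a connected graph with an initial fire X_0 of reach 1 and a retaining {f_n}-strategy {W_n}_{n≥1} with X_n ∩ W_{n+1} = ∅ for all n. For a positive integer r, set V_n = W_{(n-1)r+1} ∪ ⋯ ∪ W_{nr} and a_n = f_{(n-1)r+1} + ⋯ + f_{nr}. Then {V_n}_{n≥1} is an {a_n}-strategy for the initial fire X_0 of reach r, and the set of vertices on fire at time n under {V_n} with reach r equals X_{rn}; in particular the total burned sets coincide, so {V_n} is a retaining ({a_n}, r)-strategy for X_0. -/

import Mathlib

/-- The growth comparison relation: `f ≼ g` iff there is `C > 0` with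
`f n ≤ C * g (C*n + C) + C` for all `n`. -/
def GrowthLE (f g : ℕ → ℕ) : Prop :=
  ∃ C : ℕ, 0 < C ∧ ∀ n, f n ≤ C * g (C * n + C) + C

/-- Equivalence of growth rates. -/
def GrowthEquiv (f g : ℕ → ℕ) : Prop := GrowthLE f g ∧ GrowthLE g f

/-- The growth function of a subset `U` of a metric space, with basepoint set `A`:
`n ↦ #(U ∩ B(A, n))`. -/
noncomputable def relGrowth {X : Type*} [MetricSpace X] (U A : Set X) : ℕ → ℕ :=
  fun n => Set.ncard {x | x ∈ U ∧ ∃ a ∈ A, dist a x ≤ (n : ℝ)}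

/-- A metric space is discrete and proper iff all balls (of integer radius) are finite. -/
def DiscreteProper (X : Type*) [MetricSpace X] : Prop :=
  ∀ (x : X) (n : ℕ), {y : X | dist x y ≤ (n : ℝ)}.Finite

/-- Uniformly proper: there is a uniform bound on cardinalities of all balls of radius `n`. -/
def UniformlyProper (X : Type*) [MetricSpace X] : Prop :=
  ∃ g : ℕ → ℕ, ∀ (x : X) (n : ℕ),
    {y : X | dist x y ≤ (n : ℝ)}.Finite ∧ Set.ncard {y : X | dist x y ≤ (n : ℝ)} ≤ g n

/-- A `c`-quasi-isometry between metric spaces. -/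
def IsQuasiIsometryMS {X Y : Type*} [MetricSpace X] [MetricSpace Y] (c : ℝ) (φ : X → Y) : Prop :=
  1 ≤ c ∧
  (∀ a b : X, dist a b / c - c ≤ dist (φ a) (φ b) ∧ dist (φ a) (φ b) ≤ c * dist a b + c) ∧
  (∀ y : Y, ∃ x : X, dist (φ x) y ≤ c)

/-- Growth function of `U ⊆ V(G)` (with the metric induced by the path-metric of `G`)
with respect to basepoint set `A`. -/
noncomputable def graphGrowth {V : Type*} (G : SimpleGraph V) (U A : Set V) : ℕ → ℕ :=
  fun n => Set.ncard {v | v ∈ U ∧ ∃ a ∈ A, G.dist a v ≤ n}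

/-- `Growth(U) = Growth(G)` for `U` a set of vertices of `G` with the induced metric. -/
def GrowthEqFull {V : Type*} (G : SimpleGraph V) (U : Set V) : Prop :=
  ∃ u₀ ∈ U, GrowthEquiv (graphGrowth G Set.univ {u₀}) (graphGrowth G U {u₀})

/-- The set of vertices protected up to (and including) time `n`. -/
def protectedUpTo {V : Type*} (W : ℕ → Set V) (n : ℕ) : Set V :=
  ⋃ i ∈ Finset.Icc 1 n, W i

/-- The set of vertices on fire at time `n`, for fire reach `r`, strategy `W` and
initial fire `X0`: `X (n+1)` consists of vertices joined to `X n` by a path of length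
at most `r` avoiding `(W 1 ∪ ⋯ ∪ W (n+1)) \ X n`. -/
def fireSet {V : Type*} (G : SimpleGraph V) (r : ℕ) (W : ℕ → Set V) (X0 : Set V) : ℕ → Set V
  | 0 => X0
  | n + 1 =>
    {v | ∃ u ∈ fireSet G r W X0 n, ∃ p : G.Walk u v, p.length ≤ r ∧
      ∀ x ∈ p.support, x ∉ protectedUpTo W (n + 1) \ fireSet G r W X0 n}

/-- The set of vertices on fire at the end of the game. -/
def burnedSet {V : Type*} (G : SimpleGraph V) (r : ℕ) (W : ℕ → Set V) (X0 : Set V) : Set V :=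
  ⋃ n, fireSet G r W X0 n

/-- An `{f n}`-strategy: at each time `n ≥ 1` at most `f n` vertices are protected. -/
def IsStrategyBound {V : Type*} (f : ℕ → ℕ) (W : ℕ → Set V) : Prop :=
  ∀ n, 1 ≤ n → (W n).Finite ∧ (W n).ncard ≤ f n

/-- A finite-step strategy protects no vertices after some finite time. -/
def FiniteStepStrategy {V : Type*} (W : ℕ → Set V) : Prop :=
  ∃ N, ∀ n, N ≤ n → W n = ∅

/-- A retaining `({f n}, r)`-strategy for the initial fire `X0`. -/
def IsRetainingStrategy {V : Type*} (G : SimpleGraph V) (f : ℕ → ℕ) (r : ℕ)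
    (X0 : Set V) (W : ℕ → Set V) : Prop :=
  IsStrategyBound f W ∧ GrowthEqFull G (burnedSet G r W X0)ᶜ

/-- The `({f n}, r)`-retaining property. -/
def RetainingProperty {V : Type*} (G : SimpleGraph V) (f : ℕ → ℕ) (r : ℕ) : Prop :=
  ∀ X0 : Set V, X0.Finite → ∃ W, IsRetainingStrategy G f r X0 W

/-- Polynomial retaining property of degree `d` (fire reach one). -/
def PolyRetaining {V : Type*} (G : SimpleGraph V) (d : ℕ) : Prop :=
  ∃ K : ℕ, 0 < K ∧ RetainingProperty G (fun n => K * n ^ d) 1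

/-- The finite-step `{f n}`-retaining property (fire reach one). -/
def FiniteStepRetainingProperty {V : Type*} (G : SimpleGraph V) (f : ℕ → ℕ) : Prop :=
  ∀ X0 : Set V, X0.Finite → ∃ W, IsRetainingStrategy G f 1 X0 W ∧ FiniteStepStrategy W

/-- The finite-step polynomial retaining property of degree `d`. -/
def FiniteStepPolyRetaining {V : Type*} (G : SimpleGraph V) (d : ℕ) : Prop :=
  ∃ K : ℕ, 0 < K ∧ FiniteStepRetainingProperty G (fun n => K * n ^ d)

/-- The `({f n}, r)`-containment property. -/
def ContainmentProperty {V : Type*} (G : SimpleGraph V) (f : ℕ → ℕ) (r : ℕ) : Prop :=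
  ∀ X0 : Set V, X0.Finite →
    ∃ W, IsStrategyBound f W ∧ (burnedSet G r W X0).Finite

/-- Polynomial containment property of degree `d` (fire reach one). -/
def PolyContainment {V : Type*} (G : SimpleGraph V) (d : ℕ) : Prop :=
  ∃ K : ℕ, 0 < K ∧ ContainmentProperty G (fun n => K * n ^ d) 1

/-- The constant containment property. -/
def ConstantContainment {V : Type*} (G : SimpleGraph V) : Prop := PolyContainment G 0

/-- `D` is (the vertex set of) a connected component of `G \ K`. -/
def ComponentAvoiding {V : Type*} (G : SimpleGraph V) (K D : Set V) : Prop :=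
  D.Nonempty ∧ D ⊆ Kᶜ ∧
  (∀ u ∈ D, ∀ v ∈ D, ∃ p : G.Walk u v, ∀ x ∈ p.support, x ∉ K) ∧
  (∀ u ∈ D, ∀ v : V, v ∉ K → (∃ p : G.Walk u v, ∀ x ∈ p.support, x ∉ K) → v ∈ D)

/-- A deep component of `G \ K`: not contained in any bounded neighborhood of `K`. -/
def IsDeepComponent {V : Type*} (G : SimpleGraph V) (K D : Set V) : Prop :=
  ComponentAvoiding G K D ∧ ∀ r : ℕ, ¬ D ⊆ {v | ∃ k ∈ K, G.dist k v ≤ r}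

/-- An unbounded component of `G \ K`. -/
def IsUnboundedComponent {V : Type*} (G : SimpleGraph V) (K D : Set V) : Prop :=
  ComponentAvoiding G K D ∧ ∀ (v : V) (r : ℕ), ¬ D ⊆ {u | G.dist v u ≤ r}

/-- Uniformly locally finite graph: vertex degrees are bounded. -/
def UnifLocFinite {V : Type*} (G : SimpleGraph V) : Prop :=
  ∃ M : ℕ, ∀ v : V, (G.neighborSet v).Finite ∧ (G.neighborSet v).ncard ≤ M

/-- Locally finite graph. -/
def LocFinite {V : Type*} (G : SimpleGraph V) : Prop := ∀ v : V, (G.neighborSet v).Finite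

/-- A `c`-quasi-isometry between two connected graphs (with their path-metrics). -/
def GraphQI {V V' : Type*} (c : ℝ) (G : SimpleGraph V) (H : SimpleGraph V') (φ : V → V') : Prop :=
  1 ≤ c ∧
  (∀ a b : V, (G.dist a b : ℝ) / c - c ≤ (H.dist (φ a) (φ b) : ℝ) ∧
    (H.dist (φ a) (φ b) : ℝ) ≤ c * (G.dist a b : ℝ) + c) ∧
  (∀ y : V', ∃ x : V, (H.dist (φ x) y : ℝ) ≤ c)

/-- The Cayley graph of a group with respect to a set `S`. -/
def cayley (G : Type) [Group G] (S : Set G) : SimpleGraph G :=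
  SimpleGraph.fromRel (fun a b => a⁻¹ * b ∈ S)

/-- `S` is a finite generating set. -/
def IsFiniteGenSet {G : Type} [Group G] (S : Set G) : Prop :=
  S.Finite ∧ Subgroup.closure S = ⊤

/-- The ball of radius `n` around the identity for the word metric w.r.t. `T`. -/
def wordBall {G : Type} [Group G] (T : Set G) (n : ℕ) : Set G :=
  {g | ∃ l : List G, (∀ x ∈ l, x ∈ T ∨ x⁻¹ ∈ T) ∧ l.length ≤ n ∧ l.prod = g}

/-- The word metric w.r.t. `T`. -/
noncomputable def wordDist {G : Type} [Group G] (T : Set G) (x y : G) : ℕ :=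
  sInf {n | x⁻¹ * y ∈ wordBall T n}

/-- `G` is an amalgamated product `A ∗_C B` with `C` a proper subgroup of both factors,
where `C` corresponds to the given subgroup. -/
def SplitsOverAmalgam (G : Type) [Group G] (C : Subgroup G) : Prop :=
  ∃ (Gi : Bool → Type) (_ : ∀ i, Group (Gi i)) (K : Type) (_ : Group K)
    (φ : ∀ i, K →* Gi i),
    (∀ i, Function.Injective (φ i)) ∧ (∀ i, ¬ Function.Surjective (φ i)) ∧
    ∃ e : G ≃* Monoid.PushoutI φ,
      C = Subgroup.comap e.toMonoidHom (Monoid.PushoutI.base φ).range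

/-- `G` is an HNN-extension over the given subgroup `C`. -/
def SplitsOverHNN (G : Type) [Group G] (C : Subgroup G) : Prop :=
  ∃ (H : Type) (_ : Group H) (A B : Subgroup H) (φ : A ≃* B)
    (e : G ≃* HNNExtension H A B φ),
    C = Subgroup.comap e.toMonoidHom
      (Subgroup.map (HNNExtension.of : H →* HNNExtension H A B φ) A)

/-- `G` splits over `C`: amalgamated product with `C` proper in both factors,
or HNN-extension over `C`. -/
def SplitsOver (G : Type) [Group G] (C : Subgroup G) : Prop :=
  SplitsOverAmalgam G C ∨ SplitsOverHNN G C

/-- Amenability of a (discrete) group: existence of a left-invariant, finitely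
additive probability measure defined on all subsets. -/
def IsAmenable (G : Type) [Group G] : Prop :=
  ∃ m : Set G → ℝ, (∀ A : Set G, 0 ≤ m A) ∧ m Set.univ = 1 ∧
    (∀ A B : Set G, Disjoint A B → m (A ∪ B) = m A + m B) ∧
    (∀ (g : G) (A : Set G), m ((g * ·) '' A) = m A)


section AuxStmt7

open SimpleGraph

variable {V : Type*} {G : SimpleGraph V} {r : ℕ} {W : ℕ → Set V} {X0 : Set V}

lemma fireSet_mono_succ (n : ℕ) : fireSet G r W X0 n ⊆ fireSet G r W X0 (n + 1) := by
  intro v hv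
  refine ⟨v, hv, SimpleGraph.Walk.nil, by simp, ?_⟩
  intro x hx
  simp only [SimpleGraph.Walk.support_nil, List.mem_singleton] at hx
  subst hx
  exact fun h => h.2 hv

lemma fireSet_mono {m n : ℕ} (h : m ≤ n) : fireSet G r W X0 m ⊆ fireSet G r W X0 n := by
  induction n with
  | zero =>
    have : m = 0 := by omega
    subst this; exact subset_rfl
  | succ n ih =>
    rcases Nat.lt_or_ge m (n + 1) with h' | h'
    · exact (ih (by omega)).trans (fireSet_mono_succ n)
    · have : m = n + 1 := by omega
      subst this; exact subset_rfl

lemma protectedUpTo_mono {m n : ℕ} (h : m ≤ n) : protectedUpTo W m ⊆ protectedUpTo W n := by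
  unfold protectedUpTo
  intro x hx
  simp only [Set.mem_iUnion, Finset.mem_Icc] at hx ⊢
  obtain ⟨i, ⟨h1, h2⟩, hxi⟩ := hx
  exact ⟨i, ⟨h1, by omega⟩, hxi⟩

lemma fireSet_disj_protected (hd : ∀ n, fireSet G r W X0 n ∩ W (n + 1) = ∅) :
    ∀ n, ∀ v ∈ fireSet G r W X0 n, v ∉ protectedUpTo W n := by
  intro n
  induction n with
  | zero =>
    intro v _ hp
    simp [protectedUpTo] at hp
  | succ n ih =>
    rintro v ⟨u, hu, p, hlen, havoid⟩ hp
    have hvX : v ∈ fireSet G r W X0 n := by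
      by_contra hvX
      exact havoid v p.end_mem_support ⟨hp, hvX⟩
    have hvP : v ∉ protectedUpTo W n := ih v hvX
    have hvW : v ∈ W (n + 1) := by
      simp only [protectedUpTo, Set.mem_iUnion, Finset.mem_Icc] at hp hvP
      push_neg at hvP
      obtain ⟨i, ⟨h1, h2⟩, hvi⟩ := hp
      rcases Nat.lt_or_ge i (n + 1) with h' | h'
      · exact absurd hvi (hvP i ⟨h1, by omega⟩)
      · have : i = n + 1 := by omega
        subst this; exact hvi
    have := hd n
    have : v ∈ fireSet G r W X0 n ∩ W (n + 1) := ⟨hvX, hvW⟩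
    rw [hd n] at this
    exact this

/-- Support of a walk of length ≤ 1 consists of the endpoints. -/
lemma support_le_one {u v : V} (q : G.Walk u v) (h : q.length ≤ 1) :
    ∀ x ∈ q.support, x = u ∨ x = v := by
  cases q with
  | nil => simp
  | cons h' q' =>
    have hq0 : q'.length = 0 := by
      simp only [SimpleGraph.Walk.length_cons] at h; omega
    have := SimpleGraph.Walk.eq_of_length_eq_zero hq0
    subst this
    have : q' = SimpleGraph.Walk.nil := SimpleGraph.Walk.nil_iff_eq_nil.mp (SimpleGraph.Walk.length_eq_zero_iff.mp hq0)
    subst this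
    simp

/-- Decomposition lemma: a vertex on fire at time `m + k` (reach 1) is reached from a
vertex on fire at time `m` by a walk of length ≤ `k` whose support is on fire at time
`m + k`. -/
lemma exists_walk_of_fire (m : ℕ) :
    ∀ k, ∀ v ∈ fireSet G 1 W X0 (m + k), ∃ u ∈ fireSet G 1 W X0 m,
      ∃ p : G.Walk u v, p.length ≤ k ∧ ∀ x ∈ p.support, x ∈ fireSet G 1 W X0 (m + k) := by
  intro k
  induction k with
  | zero =>
    intro v hv
    exact ⟨v, hv, SimpleGraph.Walk.nil, by simp, by simpa using hv⟩
  | succ k ih =>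
    intro v hv
    obtain ⟨u', hu', q, hqlen, _⟩ := id hv
    obtain ⟨u, hu, p, hplen, hpsupp⟩ := ih u' hu'
    refine ⟨u, hu, p.append q, ?_, ?_⟩
    · rw [SimpleGraph.Walk.length_append]; omega
    · intro x hx
      rw [SimpleGraph.Walk.support_append, List.mem_append] at hx
      rcases hx with hx | hx
      · exact fireSet_mono_succ (m + k) (hpsupp x hx)
      · have hx' : x ∈ q.support := List.mem_of_mem_tail hx
        rcases support_le_one q hqlen x hx' with h | h
        · subst h; exact fireSet_mono_succ (m + k) hu'
        · subst h; exact hv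

/-- Composition lemma: a walk of length ≤ `k` from a burning vertex whose support avoids
`protectedUpTo W (m + k) \ fireSet _ _ _ _ m` ends at a vertex burning at time `m + k`. -/
lemma fire_of_walk :
    ∀ {u v : V} (p : G.Walk u v) (m k : ℕ), p.length ≤ k →
      u ∈ fireSet G 1 W X0 m →
      (∀ x ∈ p.support, x ∈ fireSet G 1 W X0 m ∨ x ∉ protectedUpTo W (m + k)) →
      v ∈ fireSet G 1 W X0 (m + k) := by
  intro u v p
  induction p with
  | nil =>
    intro m k _ hu _
    exact fireSet_mono (Nat.le_add_right m k) hu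
  | @cons a b c h' p' ih =>
    intro m k hlen hu hsupp
    simp only [SimpleGraph.Walk.length_cons] at hlen
    have hk : 1 ≤ k := by omega
    have hw : b ∈ fireSet G 1 W X0 (m + 1) := by
      refine ⟨a, hu, SimpleGraph.Walk.cons h' SimpleGraph.Walk.nil, by simp, ?_⟩
      rintro x hx ⟨hx1, hx2⟩
      simp only [SimpleGraph.Walk.support_cons, SimpleGraph.Walk.support_nil,
        List.mem_cons, List.mem_singleton] at hx
      rcases hx with h | h | h
      · subst h; exact hx2 hu
      · subst h
        have hxs : x ∈ (SimpleGraph.Walk.cons h' p').support := by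
          rw [SimpleGraph.Walk.support_cons]
          exact List.mem_cons_of_mem _ p'.start_mem_support
        rcases hsupp x hxs with hW | hW
        · exact hx2 hW
        · exact hW (protectedUpTo_mono (by omega) hx1)
      · simp at h
    have hres := ih (m + 1) (k - 1) (by omega) hw ?_
    · have : m + 1 + (k - 1) = m + k := by omega
      rwa [this] at hres
    · intro x hx
      rcases hsupp x (by simp [hx]) with hX | hX
      · exact Or.inl (fireSet_mono_succ m hX)
      · have : m + 1 + (k - 1) = m + k := by omega
        rw [this]; exact Or.inr hX

lemma biUnion_finite_ncard_le (s : Finset ℕ) (Wf : ℕ → Set V) (f : ℕ → ℕ)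
    (h : ∀ i ∈ s, (Wf i).Finite ∧ (Wf i).ncard ≤ f i) :
    (⋃ i ∈ s, Wf i).Finite ∧ (⋃ i ∈ s, Wf i).ncard ≤ ∑ i ∈ s, f i := by
  classical
  induction s using Finset.induction with
  | empty => simp
  | @insert j s hj ih =>
    rw [Finset.set_biUnion_insert, Finset.sum_insert hj]
    have h1 := h j (Finset.mem_insert_self j s)
    have h2 := ih (fun i hi => h i (Finset.mem_insert_of_mem hi))
    exact ⟨h1.1.union h2.1,
      le_trans (Set.ncard_union_le _ _) (add_le_add h1.2 h2.2)⟩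

end AuxStmt7

theorem stmt7 {V : Type*} (G : SimpleGraph V) (hG : G.Connected)
    (f a : ℕ → ℕ) (W Vs : ℕ → Set V) (X0 : Set V) (hX0 : X0.Finite)
    (r : ℕ) (hr : 1 ≤ r)
    (hW : IsRetainingStrategy G f 1 X0 W)
    (hdisj : ∀ n, fireSet G 1 W X0 n ∩ W (n + 1) = ∅)
    (ha : ∀ n, a n = ∑ i ∈ Finset.Icc ((n - 1) * r + 1) (n * r), f i)
    (hV : ∀ n, Vs n = ⋃ i ∈ Finset.Icc ((n - 1) * r + 1) (n * r), W i) :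
    IsStrategyBound a Vs ∧
    (∀ n, fireSet G r Vs X0 n = fireSet G 1 W X0 (r * n)) ∧
    burnedSet G r Vs X0 = burnedSet G 1 W X0 ∧
    IsRetainingStrategy G a r X0 Vs := by
  -- protected sets agree
  have hP : ∀ n, protectedUpTo Vs n = protectedUpTo W (r * n) := by
    intro n
    unfold protectedUpTo
    ext x
    simp only [Set.mem_iUnion, Finset.mem_Icc]
    constructor
    · rintro ⟨i, ⟨hi1, hi2⟩, hx⟩
      rw [hV i] at hx
      simp only [Set.mem_iUnion, Finset.mem_Icc] at hx
      obtain ⟨j, ⟨hj1, hj2⟩, hx⟩ := hx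
      have h3 : i * r ≤ n * r := Nat.mul_le_mul_right r hi2
      have h4 : n * r = r * n := Nat.mul_comm n r
      refine ⟨j, ⟨by omega, ?_⟩, hx⟩
      rw [← h4]; omega
    · rintro ⟨j, ⟨hj1, hj2⟩, hx⟩
      obtain ⟨q, hq⟩ : ∃ q, q = (j - 1) / r := ⟨_, rfl⟩
      obtain ⟨s, hs⟩ : ∃ s, s = (j - 1) % r := ⟨_, rfl⟩
      obtain ⟨t, ht⟩ : ∃ t, t = r * q := ⟨_, rfl⟩
      have h1 : t + s = j - 1 := by rw [ht, hs, hq]; exact Nat.div_add_mod (j - 1) r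
      have h2 : s < r := by rw [hs]; exact Nat.mod_lt _ (by omega)
      have h4 : t ≤ j - 1 := Nat.le.intro h1
      have hqn : q < n := by
        by_contra hc
        push_neg at hc
        have h3 : r * n ≤ t := by rw [ht]; exact Nat.mul_le_mul_left r hc
        have h5 : j ≤ r * n := hj2
        have : j ≤ j - 1 := le_trans h5 (le_trans h3 h4)
        omega
      refine ⟨q + 1, ⟨by omega, by omega⟩, ?_⟩
      rw [hV (q + 1)]
      simp only [Set.mem_iUnion, Finset.mem_Icc]
      have h5 : (q + 1 - 1) * r = t := by rw [ht, Nat.add_sub_cancel, Nat.mul_comm]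
      have h6 : (q + 1) * r = t + r := by rw [ht]; ring
      refine ⟨j, ⟨?_, ?_⟩, hx⟩
      · rw [h5]; omega
      · rw [h6]; omega
  -- fire sets agree
  have hfire : ∀ n, fireSet G r Vs X0 n = fireSet G 1 W X0 (r * n) := by
    intro n
    induction n with
    | zero => rw [Nat.mul_zero]; rfl
    | succ n ih =>
      ext v
      constructor
      · rintro ⟨u, hu, p, hlen, havoid⟩
        rw [ih] at hu
        have hsupp' : ∀ x ∈ p.support,
            x ∈ fireSet G 1 W X0 (r * n) ∨ x ∉ protectedUpTo W (r * n + r) := by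
          intro x hx
          rcases Classical.em (x ∈ fireSet G 1 W X0 (r * n)) with h | h
          · exact Or.inl h
          · right
            intro hxP
            refine havoid x hx ⟨?_, ?_⟩
            · rw [hP (n + 1)]
              rwa [show r * (n + 1) = r * n + r by ring]
            · rw [ih]; exact h
        have hres := fire_of_walk p (r * n) r hlen hu hsupp'
        rwa [show r * n + r = r * (n + 1) by ring] at hres
      · intro hv
        have hv' : v ∈ fireSet G 1 W X0 (r * n + r) := by
          rwa [show r * (n + 1) = r * n + r by ring] at hv
        obtain ⟨u, hu, p, hlen, hsupp⟩ := exists_walk_of_fire (r * n) r v hv'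
        refine ⟨u, by rw [ih]; exact hu, p, hlen, ?_⟩
        rintro x hx ⟨hx1, hx2⟩
        have hxfire := hsupp x hx
        have hnd := fireSet_disj_protected hdisj (r * n + r) x hxfire
        rw [hP (n + 1)] at hx1
        exact hnd (by rwa [show r * (n + 1) = r * n + r by ring] at hx1)
  -- burned sets agree
  have hburn : burnedSet G r Vs X0 = burnedSet G 1 W X0 := by
    unfold burnedSet
    apply Set.eq_of_subset_of_subset
    · exact Set.iUnion_subset fun n => by
        rw [hfire n]; exact Set.subset_iUnion _ (r * n)
    · refine Set.iUnion_subset fun m => ?_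
      have h1 : fireSet G 1 W X0 m ⊆ fireSet G 1 W X0 (r * m) :=
        fireSet_mono (Nat.le_mul_of_pos_left m (by omega))
      rw [← hfire m] at h1
      exact h1.trans (Set.subset_iUnion _ m)
  -- strategy bound
  have hbound : IsStrategyBound a Vs := by
    intro n hn
    rw [hV n, ha n]
    apply biUnion_finite_ncard_le
    intro i hi
    simp only [Finset.mem_Icc] at hi
    exact hW.1 i (by omega)
  exact ⟨hbound, hfire, hburn, hbound, by rw [hburn]; exact hW.2⟩
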